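/- Every automorphism of a finite product of chains ∏_{i=1}^m C_i^{n_i}, where the chains C_i are pairwise non-isomorphic, decomposes as a product of automorphisms φ_i of C_i^{n_i}, and each φ_i permutes coordinates: there is σ_i ∈ S_{n_i} with φ_i(x_1,...,x_{n_i}) = (x_{σ_i^{-1}(1)},...,x_{σ_i^{-1}(n_i)}). -/

import Mathlib

namespace PaperSCD

variable {β : Type*}

/-- `x` is covered by `y` with respect to the order relation `le`. -/
def Covers (le : β → β → Prop) (x y : β) : Prop :=
  le x y ∧ x ≠ y ∧ ∀ z, le x z → le z y → z = x ∨ z = y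

/-- `r` is a rank function for the order `le`: covers raise rank by one and
minimal elements have rank zero. -/
def IsRankFn (le : β → β → Prop) (r : β → ℕ) : Prop :=
  (∀ x y, Covers le x y → r y = r x + 1) ∧ ∀ x, (∀ y, le y x → y = x) → r x = 0

/-- `C` is a chain with respect to `le`. -/
def IsChn (le : β → β → Prop) (C : Set β) : Prop :=
  ∀ x ∈ C, ∀ y ∈ C, le x y ∨ le y x

/-- `x` is covered by `y` inside the subposet `S`. -/
def CoversIn (le : β → β → Prop) (S : Set β) (x y : β) : Prop :=
  x ∈ S ∧ y ∈ S ∧ le x y ∧ x ≠ y ∧ ∀ z ∈ S, le x z → le z y → z = x ∨ z = y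

/-- The chain `C` is saturated in the ambient order: consecutive elements of `C`
are covers in the ambient order. -/
def SatChn (le : β → β → Prop) (C : Set β) : Prop :=
  ∀ x ∈ C, ∀ y ∈ C, CoversIn le C x y → Covers le x y

/-- `C` is a nonempty saturated chain which is symmetric for rank function `r`
in a poset of rank `R`. -/
def IsSymmSatChain (le : β → β → Prop) (r : β → ℕ) (R : ℕ) (C : Set β) : Prop :=
  C.Nonempty ∧ IsChn le C ∧ SatChn le C ∧
    ∃ a ∈ C, ∃ b ∈ C, (∀ x ∈ C, le a x ∧ le x b) ∧ r a + r b = R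

/-- `𝒟` is a symmetric chain decomposition. -/
def IsSCD (le : β → β → Prop) (r : β → ℕ) (R : ℕ) (𝒟 : Set (Set β)) : Prop :=
  (∀ C ∈ 𝒟, IsSymmSatChain le r R C) ∧ ∀ x : β, ∃! C, C ∈ 𝒟 ∧ x ∈ C

/-- The order `le` is a symmetric chain order. -/
def IsSCO (le : β → β → Prop) : Prop :=
  ∃ (r : β → ℕ) (R : ℕ) (𝒟 : Set (Set β)),
    IsRankFn le r ∧ (∀ x, r x ≤ R) ∧ (Nonempty β → ∃ x, r x = R) ∧ IsSCD le r R 𝒟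

/-- The quotient order on `Quot rel`: `[x] ≤ [y]` iff some representatives are comparable. -/
def qle (rel : β → β → Prop) (le : β → β → Prop) (a b : Quot rel) : Prop :=
  ∃ x y : β, Quot.mk rel x = a ∧ Quot.mk rel y = b ∧ le x y

/-- The permutation `(i, r) ↦ (ρ_r i, τ r)` of `[k] × [t]`. -/
def wrPerm {k t : ℕ} (ρ : Fin t → Equiv.Perm (Fin k)) (τ : Equiv.Perm (Fin t)) :
    Equiv.Perm (Fin k × Fin t) where
  toFun p := (ρ p.2 p.1, τ p.2)
  invFun p := ((ρ (τ.symm p.2)).symm p.1, τ.symm p.2)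
  left_inv := by rintro ⟨i, r⟩; simp
  right_inv := by rintro ⟨i, r⟩; simp

/-- The wreath product `K ≀ T` as a set of permutations of `[k] × [t]`. -/
def wreathSet {k t : ℕ} (K : Subgroup (Equiv.Perm (Fin k))) (T : Subgroup (Equiv.Perm (Fin t))) :
    Set (Equiv.Perm (Fin k × Fin t)) :=
  { φ | ∃ ρ τ, (∀ r, ρ r ∈ K) ∧ τ ∈ T ∧ φ = wrPerm ρ τ }

/-- A subgroup of a permutation group is generated by powers of pairwise disjoint cycles. -/
def GenByPowersOfDisjointCycles {α : Type*} (T : Subgroup (Equiv.Perm α)) : Prop :=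
  ∃ (m : ℕ) (σ : Fin m → Equiv.Perm α) (e : Fin m → ℕ),
    (∀ i, (σ i).IsCycle) ∧ (∀ i j, i ≠ j → (σ i).Disjoint (σ j)) ∧
    T = Subgroup.closure (Set.range fun i => σ i ^ e i)

/-- The `r`-th column of a subset of `[k] × [t]`, identified with a subset of `[k]`. -/
def col {k t : ℕ} (X : Finset (Fin k × Fin t)) (r : Fin t) : Finset (Fin k) :=
  (X.filter fun p => p.2 = r).image Prod.fst

/-- Orbit relation of `K ≤ S_k` on subsets of `[k]`. -/
def relK {k : ℕ} (K : Subgroup (Equiv.Perm (Fin k))) :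
    Finset (Fin k) → Finset (Fin k) → Prop :=
  fun A B => ∃ g ∈ K, A.image ⇑g = B

/-- Orbit relation of the wreath product `K ≀ T` on subsets of `[k] × [t]`. -/
def relW {k t : ℕ} (K : Subgroup (Equiv.Perm (Fin k))) (T : Subgroup (Equiv.Perm (Fin t))) :
    Finset (Fin k × Fin t) → Finset (Fin k × Fin t) → Prop :=
  fun X Y => ∃ φ ∈ wreathSet K T, X.image ⇑φ = Y

/-- The rank (cardinality of a representative) on `B_k/K`. -/
def qrank {k : ℕ} (K : Subgroup (Equiv.Perm (Fin k))) : Quot (relK K) → ℕ :=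
  Quot.lift Finset.card (by
    rintro A B ⟨g, -, rfl⟩
    exact (Finset.card_image_of_injective A g.injective).symm)

/-- The coordinate-permuting action `σ • f = f ∘ σ⁻¹`. -/
def actF {n : ℕ} {γ : Type*} (σ : Equiv.Perm (Fin n)) (f : Fin n → γ) : Fin n → γ :=
  fun i => f (σ.symm i)

/-- `τ` stabilizes `j̄` under the coordinate-permuting action. -/
def ActStab {t s : ℕ} (τ : Equiv.Perm (Fin t)) (j : Fin t → Fin s) : Prop :=
  ∀ r, j (τ.symm r) = j r

end PaperSCD
open PaperSCD


namespace Stmt18Aux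

open Function

set_option linter.unusedSectionVars false

variable {ι : Type*} [DecidableEq ι] {δ : ι → Type*} [∀ p, Fintype (δ p)]
  [∀ p, LinearOrder (δ p)] [∀ p, Nonempty (δ p)]

/-- The bottom element of the product. -/
noncomputable def bm (δ : ι → Type*) [∀ p, Fintype (δ p)] [∀ p, LinearOrder (δ p)]
    [∀ p, Nonempty (δ p)] : ∀ p, δ p :=
  fun _ => Finset.univ.min' Finset.univ_nonempty

lemma bm_le' (p : ι) (a : δ p) : bm δ p ≤ a := Finset.min'_le _ _ (Finset.mem_univ _)

lemma bm_le (x : ∀ p, δ p) : bm δ ≤ x := fun p => bm_le' p (x p)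

lemma eq_bm_of_not_lt {p : ι} {a : δ p} (h : ¬ bm δ p < a) : a = bm δ p :=
  le_antisymm (not_lt.mp h) (bm_le' p a)

/-- The "join-irreducible-like" element supported at `p` with value `a`. -/
noncomputable def e (p : ι) (a : δ p) : ∀ q, δ q := Function.update (bm δ) p a

@[simp] lemma e_self (p : ι) (a : δ p) : e p a p = a := Function.update_self ..

lemma e_ne {p q : ι} (h : q ≠ p) (a : δ p) : e p a q = bm δ q := Function.update_of_ne h ..

lemma e_le_iff {p : ι} {a : δ p} {x : ∀ q, δ q} : e p a ≤ x ↔ a ≤ x p := by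
  constructor
  · intro h; have := h p; rwa [e_self] at this
  · intro h q
    rcases eq_or_ne q p with rfl | hq
    · rw [e_self]; exact h
    · rw [e_ne hq]; exact bm_le' q (x q)

lemma e_le_e_iff {p : ι} {a a' : δ p} : e p a ≤ e p a' ↔ a ≤ a' := by
  rw [e_le_iff, e_self]

lemma e_inj {p : ι} {a a' : δ p} (h : e p a = e p a') : a = a' := by
  have := congrFun h p; rwa [e_self, e_self] at this

lemma e_lt_e_iff {p : ι} {a a' : δ p} : e p a < e p a' ↔ a < a' := by
  rw [lt_iff_le_and_ne, lt_iff_le_and_ne, e_le_e_iff]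
  simp only [ne_eq, and_congr_right_iff]
  exact fun _ => not_congr ⟨e_inj, fun h => h ▸ rfl⟩

lemma pos_eq_of_le {p q : ι} {a : δ p} {c : δ q} (hpa : bm δ p < a) (h : e p a ≤ e q c) :
    p = q := by
  by_contra hne
  have hle := h p
  rw [e_self, e_ne hne] at hle
  exact absurd hle (not_le.mpr hpa)

lemma pos_eq_of_eq {p q : ι} {a : δ p} {c : δ q} (hpa : bm δ p < a) (h : e p a = e q c) :
    p = q := pos_eq_of_le hpa h.le

lemma supIrred_iff {x : ∀ p, δ p} : SupIrred x ↔ ∃ p a, bm δ p < a ∧ x = e p a := by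
  constructor
  · rintro ⟨hmin, hsup⟩
    have hxb : x ≠ bm δ := by rintro rfl; exact hmin fun y hy => bm_le y
    have hex : ∃ p, bm δ p < x p := by
      by_contra hc
      push_neg at hc
      exact hxb (funext fun p => le_antisymm (hc p) (bm_le' p (x p)))
    obtain ⟨p, hp⟩ := hex
    refine ⟨p, x p, hp, funext fun q => ?_⟩
    rcases eq_or_ne q p with rfl | hq
    · rw [e_self]
    · rw [e_ne hq]
      by_contra hne
      have hq' : bm δ q < x q := (bm_le' q (x q)).lt_of_ne (Ne.symm hne)
      have hyz : Function.update x p (bm δ p) ⊔ Function.update x q (bm δ q) = x := by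
        funext r
        rw [Pi.sup_apply]
        rcases eq_or_ne r p with rfl | hrp
        · rw [Function.update_self, Function.update_of_ne (fun h => hq h.symm)]
          exact sup_eq_right.mpr (bm_le' r (x r))
        · rcases eq_or_ne r q with rfl | hrq
          · rw [Function.update_self, Function.update_of_ne hrp]
            exact sup_eq_left.mpr (bm_le' r (x r))
          · rw [Function.update_of_ne hrp, Function.update_of_ne hrq, sup_idem]
      rcases hsup hyz with h | h
      · have := congrFun h p
        rw [Function.update_self] at this
        exact hp.ne this
      · have := congrFun h q
        rw [Function.update_self] at this
        exact hq'.ne this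
  · rintro ⟨p, a, ha, rfl⟩
    constructor
    · intro hmin
      have := hmin (bm_le (e p a)) p
      rw [e_self] at this
      exact absurd this (not_le.mpr ha)
    · intro y z hyz
      have hyp : y p ⊔ z p = a := by
        have := congrFun hyz p
        rwa [Pi.sup_apply, e_self] at this
      rcases le_total (y p) (z p) with h | h
      · right
        refine le_antisymm (hyz ▸ le_sup_right) ?_
        rw [e_le_iff, ← hyp, sup_eq_right.mpr h]
      · left
        refine le_antisymm (hyz ▸ le_sup_left) ?_
        rw [e_le_iff, ← hyp, sup_eq_left.mpr h]

lemma supIrred_map (φ : (∀ p, δ p) ≃o (∀ p, δ p)) {x : ∀ p, δ p} (h : SupIrred x) :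
    SupIrred (φ x) := by
  constructor
  · intro hmin
    refine h.1 fun y hy => ?_
    exact φ.le_iff_le.mp (hmin (φ.le_iff_le.mpr hy))
  · intro y z hyz
    have hx : φ.symm y ⊔ φ.symm z = x := by
      apply φ.injective
      rw [φ.map_sup, φ.apply_symm_apply, φ.apply_symm_apply, hyz]
    rcases h.2 hx with h' | h'
    · left; rw [← h', φ.apply_symm_apply]
    · right; rw [← h', φ.apply_symm_apply]

lemma chain_map (φ : (∀ p, δ p) ≃o (∀ p, δ p)) (p : ι) (a₀ : δ p) (h₀ : bm δ p < a₀) :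
    ∃ q, ∀ a, bm δ p < a → ∃ c, bm δ q < c ∧ φ (e p a) = e q c := by
  have hS : ∀ a : δ p, bm δ p < a → SupIrred (φ (e p a)) := fun a ha =>
    supIrred_map φ (supIrred_iff.mpr ⟨p, a, ha, rfl⟩)
  obtain ⟨q, c₀, hc₀, he₀⟩ := supIrred_iff.mp (hS a₀ h₀)
  refine ⟨q, fun a ha => ?_⟩
  obtain ⟨q', c, hc, he⟩ := supIrred_iff.mp (hS a ha)
  have hq : q' = q := by
    rcases le_total a a₀ with hle | hle
    · have h1 : φ (e p a) ≤ φ (e p a₀) := φ.monotone (e_le_e_iff.mpr hle)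
      rw [he, he₀] at h1
      exact pos_eq_of_le hc h1
    · have h1 : φ (e p a₀) ≤ φ (e p a) := φ.monotone (e_le_e_iff.mpr hle)
      rw [he, he₀] at h1
      exact (pos_eq_of_le hc₀ h1).symm
  subst hq
  exact ⟨c, hc, he⟩

lemma chain_map_symm (φ : (∀ p, δ p) ≃o (∀ p, δ p)) (p q : ι) (a₀ : δ p) (h₀ : bm δ p < a₀)
    (h : ∀ a, bm δ p < a → ∃ c, bm δ q < c ∧ φ (e p a) = e q c) :
    ∀ c, bm δ q < c → ∃ a, bm δ p < a ∧ φ.symm (e q c) = e p a := by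
  obtain ⟨c₀, hc₀, he₀⟩ := h a₀ h₀
  obtain ⟨p', hp'⟩ := chain_map φ.symm q c₀ hc₀
  have hpe : p' = p := by
    obtain ⟨a', ha', he'⟩ := hp' c₀ hc₀
    have hee : e p' a' = e p a₀ := by
      rw [← he', ← he₀, φ.symm_apply_apply]
    exact pos_eq_of_eq ha' hee
  subst hpe
  exact hp'

lemma eq_of_forall_pos_le {q : ι} {u v : δ q} (h : ∀ c, bm δ q < c → (c ≤ u ↔ c ≤ v)) :
    u = v := by
  have h1 : ∀ w w' : δ q, (∀ c, bm δ q < c → (c ≤ w ↔ c ≤ w')) → w ≤ w' := by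
    intro w w' hw
    rcases (bm_le' q w).lt_or_eq with hw' | hw'
    · exact (hw w hw').mp le_rfl
    · rw [← hw']; exact bm_le' q w'
  exact le_antisymm (h1 u v h) (h1 v u fun c hc => (h c hc).symm)

lemma key_active (φ : (∀ p, δ p) ≃o (∀ p, δ p)) (p q : ι)
    (h : ∀ a, bm δ p < a → ∃ c, bm δ q < c ∧ φ (e p a) = e q c)
    (hs : ∀ c, bm δ q < c → ∃ a, bm δ p < a ∧ φ.symm (e q c) = e p a) :
    ∃ G : δ p ≃o δ q, ∀ f, φ f q = G (f p) := by
  classical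
  choose C hC hφC using h
  set G : δ p → δ q := fun d => if hd : bm δ p < d then C d hd else bm δ q with hG
  have hmono : StrictMono G := by
    intro d d' hdd'
    have hd' : bm δ p < d' := lt_of_le_of_lt (bm_le' p d) hdd'
    by_cases hd : bm δ p < d
    · have h1 : φ (e p d) < φ (e p d') := φ.strictMono (e_lt_e_iff.mpr hdd')
      rw [hφC d hd, hφC d' hd'] at h1
      have := e_lt_e_iff.mp h1
      simpa [hG, hd, hd'] using this
    · have hdb : d = bm δ p := eq_bm_of_not_lt hd
      simp only [hG, hd, hd', dif_pos, dif_neg, not_false_iff]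
      exact hC d' hd'
  have hsurj : Function.Surjective G := by
    intro c
    by_cases hc : bm δ q < c
    · obtain ⟨a, ha, hsa⟩ := hs c hc
      refine ⟨a, ?_⟩
      have h1 : φ (e p a) = e q c := by
        rw [← hsa, φ.apply_symm_apply]
      have h2 : e q (C a ha) = e q c := by rw [← hφC a ha, h1]
      have h3 : C a ha = c := e_inj h2
      simp [hG, ha, h3]
    · refine ⟨bm δ p, ?_⟩
      rw [eq_bm_of_not_lt hc]
      simp [hG]
  refine ⟨StrictMono.orderIsoOfSurjective G hmono hsurj, fun f => ?_⟩
  rw [StrictMono.coe_orderIsoOfSurjective]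
  apply eq_of_forall_pos_le
  intro c hc
  obtain ⟨a, ha, hsa⟩ := hs c hc
  have h1 : φ (e p a) = e q c := by rw [← hsa, φ.apply_symm_apply]
  have hchain : c ≤ φ f q ↔ a ≤ f p := by
    rw [← e_le_iff (x := φ f), ← h1, φ.le_iff_le, e_le_iff]
  rw [hchain]
  by_cases hfp : bm δ p < f p
  · have : G (f p) = C (f p) hfp := by simp [hG, hfp]
    rw [this]
    constructor
    · intro hh
      have h2 : φ (e p a) ≤ φ (e p (f p)) := φ.monotone (e_le_e_iff.mpr hh)
      rw [h1, hφC (f p) hfp] at h2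
      exact e_le_e_iff.mp h2
    · intro hh
      have h2 : e p a ≤ e p (f p) := by
        have h3 : e q c ≤ e q (C (f p) hfp) := e_le_e_iff.mpr hh
        rw [← h1, ← hφC (f p) hfp] at h3
        exact φ.le_iff_le.mp h3
      exact e_le_e_iff.mp h2
  · have hfb : f p = bm δ p := eq_bm_of_not_lt hfp
    have : G (f p) = bm δ q := by simp [hG, hfp]
    rw [this, hfb]
    constructor
    · intro hh; exact absurd (lt_of_lt_of_le ha hh) (lt_irrefl _)
    · intro hh; exact absurd (lt_of_lt_of_le hc hh) (lt_irrefl _)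

lemma key_inactive (φ : (∀ p, δ p) ≃o (∀ p, δ p)) (p : ι) (h : ∀ a : δ p, ¬ bm δ p < a) :
    ∀ f, φ f p = f p := by
  intro f
  rw [eq_bm_of_not_lt (h (φ f p)), eq_bm_of_not_lt (h (f p))]

theorem key [Finite ι] (φ : (∀ p, δ p) ≃o (∀ p, δ p)) :
    ∃ F : ι → ι, Function.Bijective F ∧
      ∀ p, ∃ G : δ p ≃o δ (F p), ∀ f, φ f (F p) = G (f p) := by
  classical
  have hmain : ∀ p, ∃ q, (∃ G : δ p ≃o δ q, ∀ f, φ f q = G (f p)) ∧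
      ((∃ a : δ p, bm δ p < a) →
        ((∃ c : δ q, bm δ q < c) ∧
          ∀ c, bm δ q < c → ∃ a, bm δ p < a ∧ φ.symm (e q c) = e p a)) ∧
      ((¬ ∃ a : δ p, bm δ p < a) → q = p) := by
    intro p
    by_cases hp : ∃ a : δ p, bm δ p < a
    · obtain ⟨a₀, h₀⟩ := hp
      obtain ⟨q, hq⟩ := chain_map φ p a₀ h₀
      have hsymm := chain_map_symm φ p q a₀ h₀ hq
      obtain ⟨c₀, hc₀, -⟩ := hq a₀ h₀
      exact ⟨q, key_active φ p q hq hsymm, fun _ => ⟨⟨c₀, hc₀⟩, hsymm⟩,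
        fun hh => absurd ⟨a₀, h₀⟩ hh⟩
    · exact ⟨p, ⟨OrderIso.refl _, key_inactive φ p fun a ha => hp ⟨a, ha⟩⟩,
        fun hh => absurd hh hp, fun _ => rfl⟩
  choose F hG hsym hfix using hmain
  have hinj : Function.Injective F := by
    intro p p' hpp'
    by_cases hp : ∃ a : δ p, bm δ p < a <;> by_cases hp' : ∃ a : δ p', bm δ p' < a
    · have hex := (hsym p hp).1
      have hsp := (hsym p hp).2
      have hsp' := (hsym p' hp').2
      rw [hpp'] at hex hsp
      obtain ⟨c, hc⟩ := hex
      obtain ⟨a, ha, h1⟩ := hsp c hc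
      obtain ⟨a', ha', h2⟩ := hsp' c hc
      exact pos_eq_of_eq ha (h1.symm.trans h2)
    · have hex := (hsym p hp).1
      rw [hpp', hfix p' hp'] at hex
      exact absurd hex hp'
    · have hex := (hsym p' hp').1
      rw [← hpp', hfix p hp] at hex
      exact absurd hex hp
    · rw [hfix p hp, hfix p' hp'] at hpp'
      exact hpp'
  exact ⟨F, Finite.injective_iff_bijective.mp hinj, hG⟩

end Stmt18Aux

namespace Stmt18Aux

theorem key' {ι : Type*} [DecidableEq ι] [Finite ι] {δ : ι → Type*} [∀ p, Fintype (δ p)]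
    [∀ p, LinearOrder (δ p)] (φ : (∀ p, δ p) ≃o (∀ p, δ p)) :
    ∃ F : ι → ι, Function.Bijective F ∧
      ∀ p, ∃ G : δ p ≃o δ (F p), ∀ f, φ f (F p) = G (f p) := by
  by_cases hne : ∀ p, Nonempty (δ p)
  · haveI : ∀ p, Nonempty (δ p) := hne
    exact key φ
  · push_neg at hne
    obtain ⟨p₀, hp₀⟩ := hne
    exact ⟨id, Function.bijective_id,
      fun p => ⟨OrderIso.refl _, fun f => (@IsEmpty.false _ hp₀ (f p₀)).elim⟩⟩

lemma sigma_eta {m : ℕ} {n : Fin m → ℕ} (p : (i : Fin m) × Fin (n i)) {i : Fin m}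
    (h : p.1 = i) : p = ⟨i, Fin.cast (congrArg n h) p.2⟩ := by
  obtain ⟨i', j'⟩ := p
  dsimp at h
  subst h
  rfl

end Stmt18Aux


/-- Every automorphism of a finite product of powers of pairwise
non-isomorphic chains `∏_{i=1}^m C_i^{n_i}` decomposes into automorphisms of the factors
`C_i^{n_i}`, each of which permutes coordinates. -/
theorem stmt_18 {m : ℕ} (α : Fin m → Type*) [∀ i, Fintype (α i)] [∀ i, LinearOrder (α i)]
    (hne : ∀ i j : Fin m, i ≠ j → IsEmpty (α i ≃o α j))
    (n : Fin m → ℕ)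
    (φ : ((i : Fin m) → Fin (n i) → α i) ≃o ((i : Fin m) → Fin (n i) → α i)) :
    ∃ σ : (i : Fin m) → Equiv.Perm (Fin (n i)),
      ∀ (f : (i : Fin m) → Fin (n i) → α i) (i : Fin m) (j : Fin (n i)),
        φ f i j = f i ((σ i).symm j) := by
  classical
  let ι := (i : Fin m) × Fin (n i)
  let Φ : ((p : ι) → α p.1) ≃o ((i : Fin m) → Fin (n i) → α i) :=
    { toEquiv := Equiv.piCurry fun i (_ : Fin (n i)) => α i
      map_rel_iff' := by
        intro f g
        constructor
        · intro h p
          exact h p.1 p.2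
        · intro h i j
          exact h ⟨i, j⟩ }
  let φ' : ((p : ι) → α p.1) ≃o ((p : ι) → α p.1) := Φ.trans (φ.trans Φ.symm)
  obtain ⟨F, hFbij, hF⟩ := Stmt18Aux.key' φ'
  choose G hG using hF
  have hfst : ∀ p : ι, (F p).1 = p.1 := by
    intro p
    by_contra h
    exact (hne p.1 (F p).1 (fun hh => h hh.symm)).false (G p)
  let t : ∀ i, Fin (n i) → Fin (n i) := fun i j =>
    Fin.cast (congrArg n (hfst ⟨i, j⟩)) (F ⟨i, j⟩).2
  have hFt : ∀ i j, F ⟨i, j⟩ = ⟨i, t i j⟩ := fun i j =>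
    Stmt18Aux.sigma_eta _ (hfst ⟨i, j⟩)
  have htinj : ∀ i, Function.Injective (t i) := by
    intro i j j' h
    have h2 : F ⟨i, j⟩ = F ⟨i, j'⟩ := by rw [hFt, hFt, h]
    have h3 := hFbij.1 h2
    have h4 := (Sigma.ext_iff.mp h3).2
    exact eq_of_heq h4
  refine ⟨fun i => Equiv.ofBijective (t i) (Finite.injective_iff_bijective.mp (htinj i)), ?_⟩
  intro f i j
  set σi := Equiv.ofBijective (t i) (Finite.injective_iff_bijective.mp (htinj i)) with hσi
  set j₀ := σi.symm j with hj₀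
  have hσ : t i j₀ = j := σi.apply_symm_apply j
  have hFkey : F ⟨i, j₀⟩ = ⟨i, j⟩ := by rw [hFt, hσ]
  have hkey := hG ⟨i, j₀⟩ (fun p : ι => f p.1 p.2)
  have main : ∀ (q : ι), q = ⟨i, j⟩ → ∀ G' : α i ≃o α q.1,
      φ f q.1 q.2 = G' (f i j₀) → φ f i j = f i j₀ := by
    rintro q rfl G' hq
    rwa [Subsingleton.elim G' (OrderIso.refl (α i)), OrderIso.refl_apply] at hq
  exact main (F ⟨i, j₀⟩) hFkey (G ⟨i, j₀⟩) hkey
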